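/- Let D ∈ ℝ^{m×k} have full column rank and let A, B ∈ ℝ^{m×m} be symmetric positive definite with A ⪯ B. Then D (DᵀBD)⁻¹ Dᵀ ⪯ D (DᵀAD)⁻¹ Dᵀ. -/

import Mathlib

open Matrix

lemma sandwich_posDef {m k : ℕ} (D : Matrix (Fin m) (Fin k) ℝ)
    (hD : LinearIndependent ℝ (fun j : Fin k => D.transpose j))
    (A : Matrix (Fin m) (Fin m) ℝ) (hApd : A.PosDef) :
    (D.transpose * A * D).PosDef := by
  have hDinj : Function.Injective D.mulVec := Matrix.mulVec_injective_iff.mpr hD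
  have hDt : D.transpose = Dᴴ := by
    ext i j; simp [Matrix.conjTranspose_apply]
  refine Matrix.PosDef.of_dotProduct_mulVec_pos (by rw [hDt]; exact Matrix.isHermitian_conjTranspose_mul_mul D hApd.isHermitian)
    (fun x hx => ?_)
  have hx' : D *ᵥ x ≠ 0 := by
    intro h
    apply hx
    apply hDinj
    simpa using h
  have := hApd.dotProduct_mulVec_pos hx'
  simp only [star_trivial] at this ⊢
  have heq : x ⬝ᵥ ((D.transpose * A * D) *ᵥ x) = (D *ᵥ x) ⬝ᵥ (A *ᵥ (D *ᵥ x)) := by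
    rw [← Matrix.mulVec_mulVec, ← Matrix.mulVec_mulVec, Matrix.dotProduct_mulVec,
      Matrix.vecMul_transpose]
  rw [heq]
  exact this


lemma inv_sub_inv_identity {n : ℕ} (S T : Matrix (Fin n) (Fin n) ℝ)
    (hS1 : S * S⁻¹ = 1) (hS2 : S⁻¹ * S = 1) (hT1 : T * T⁻¹ = 1) (hT2 : T⁻¹ * T = 1) :
    S⁻¹ - T⁻¹ = T⁻¹ * ((T - S) * S⁻¹ * (T - S) + (T - S)) * T⁻¹ := by
  have cS1 : ∀ X : Matrix (Fin n) (Fin n) ℝ, S * (S⁻¹ * X) = X := fun X => by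
    rw [← Matrix.mul_assoc, hS1, Matrix.one_mul]
  have cS2 : ∀ X : Matrix (Fin n) (Fin n) ℝ, S⁻¹ * (S * X) = X := fun X => by
    rw [← Matrix.mul_assoc, hS2, Matrix.one_mul]
  have cT1 : ∀ X : Matrix (Fin n) (Fin n) ℝ, T * (T⁻¹ * X) = X := fun X => by
    rw [← Matrix.mul_assoc, hT1, Matrix.one_mul]
  have cT2 : ∀ X : Matrix (Fin n) (Fin n) ℝ, T⁻¹ * (T * X) = X := fun X => by
    rw [← Matrix.mul_assoc, hT2, Matrix.one_mul]
  simp only [Matrix.sub_mul, Matrix.mul_sub, Matrix.add_mul, Matrix.mul_add, Matrix.mul_assoc,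
    hS1, hS2, hT1, hT2, cS1, cS2, cT1, cT2, Matrix.mul_one, Matrix.one_mul]
  abel

/-- Let `D : ℝ^{m×k}` have full column rank and `A, B : ℝ^{m×m}` be symmetric positive
definite with `A ⪯ B`. Then `D (DᵀBD)⁻¹ Dᵀ ⪯ D (DᵀAD)⁻¹ Dᵀ`. -/
theorem sandwich_inv_antitone {m k : ℕ} (D : Matrix (Fin m) (Fin k) ℝ)
    (hD : LinearIndependent ℝ (fun j : Fin k => D.transpose j))
    (A B : Matrix (Fin m) (Fin m) ℝ)
    (hAsymm : A.IsSymm) (hBsymm : B.IsSymm)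
    (hApd : A.PosDef) (hBpd : B.PosDef)
    (hAB : (B - A).PosSemidef) :
    (D * (D.transpose * A * D)⁻¹ * D.transpose
      - D * (D.transpose * B * D)⁻¹ * D.transpose).PosSemidef := by
  classical
  have hDt : D.transpose = Dᴴ := by
    ext i j; simp [Matrix.conjTranspose_apply]
  set S := D.transpose * A * D with hS
  set T := D.transpose * B * D with hT
  have hSpd : S.PosDef := sandwich_posDef D hD A hApd
  have hTpd : T.PosDef := sandwich_posDef D hD B hBpd
  have hSdet : IsUnit S.det := (Matrix.isUnit_iff_isUnit_det S).mp hSpd.isUnit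
  have hTdet : IsUnit T.det := (Matrix.isUnit_iff_isUnit_det T).mp hTpd.isUnit
  have hS1 : S * S⁻¹ = 1 := Matrix.mul_nonsing_inv S hSdet
  have hS2 : S⁻¹ * S = 1 := Matrix.nonsing_inv_mul S hSdet
  have hT1 : T * T⁻¹ = 1 := Matrix.mul_nonsing_inv T hTdet
  have hT2 : T⁻¹ * T = 1 := Matrix.nonsing_inv_mul T hTdet
  -- T - S is PSD
  have hTS : (T - S).PosSemidef := by
    have : T - S = Dᴴ * (B - A) * D := by
      rw [← hDt, hS, hT, Matrix.mul_sub, Matrix.sub_mul]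
    rw [this]
    exact hAB.conjTranspose_mul_mul_same D
  -- the key algebraic identity
  have key : S⁻¹ - T⁻¹ = T⁻¹ * ((T - S) * S⁻¹ * (T - S) + (T - S)) * T⁻¹ :=
    inv_sub_inv_identity S T hS1 hS2 hT1 hT2
  -- inner matrix is PSD
  have hinner : ((T - S) * S⁻¹ * (T - S) + (T - S)).PosSemidef := by
    have h1 : ((T - S) * S⁻¹ * (T - S)).PosSemidef := by
      have hTSherm : (T - S)ᴴ = T - S := hTS.isHermitian
      have := hSpd.inv.posSemidef.conjTranspose_mul_mul_same (T - S)
      rwa [hTSherm] at this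
    exact h1.add hTS
  have hmid : (T⁻¹ * ((T - S) * S⁻¹ * (T - S) + (T - S)) * T⁻¹).PosSemidef := by
    have hTinvherm : (T⁻¹)ᴴ = T⁻¹ := hTpd.inv.isHermitian
    have := hinner.conjTranspose_mul_mul_same T⁻¹
    rwa [hTinvherm] at this
  have hfinal : D * (S⁻¹ - T⁻¹) * D.transpose
      = D * S⁻¹ * D.transpose - D * T⁻¹ * D.transpose := by
    rw [Matrix.mul_sub, Matrix.sub_mul]
  rw [← hfinal, key, hDt]
  exact hmid.mul_mul_conjTranspose_same D
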